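/- Consider the action Θ' of ℝ² on 𝕋 × S³ given by Θ'_{(x,y)}(η; z, w) := (e^{−2πi x} η; z, e^{4πi y} w). Then the map 𝕋 × S³ → ℂ, (η; z, w) ↦ z, is constant on orbits and induces a homeomorphism from the orbit space (𝕋 × S³)/ℝ², endowed with the quotient topology, onto the closed unit disk {ζ ∈ ℂ : |ζ| ≤ 1}. -/

import Mathlib

/-- The space `𝕋 × S³`, realized inside `ℂ × ℂ × ℂ`: points `(η; z, w)` with `|η| = 1` and
`|z|² + |w|² = 1`. -/
abbrev TorusS3 : Type :=
  {v : ℂ × ℂ × ℂ // ‖v.1‖ = 1 ∧ ‖v.2.1‖ ^ 2 + ‖v.2.2‖ ^ 2 = 1}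

/-- The orbit relation of the action `Θ'_{(x,y)}(η; z, w) = (e^{−2πi x} η; z, e^{4πi y} w)`
of `ℝ²` on `𝕋 × S³`: `w` is in the orbit of `v` iff `w = Θ'_{(x,y)} v` for some `x, y ∈ ℝ`. -/
def torusS3Rel (v w : TorusS3) : Prop :=
  ∃ x y : ℝ,
    (w : ℂ × ℂ × ℂ) =
      (Complex.exp (-(2 * Real.pi * x) * Complex.I) * (v : ℂ × ℂ × ℂ).1,
       (v : ℂ × ℂ × ℂ).2.1,
       Complex.exp ((4 * Real.pi * y) * Complex.I) * (v : ℂ × ℂ × ℂ).2.2)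

/-- Consider the action `Θ'_{(x,y)}(η; z, w) := (e^{−2πi x} η; z, e^{4πi y} w)` of `ℝ²` on
`𝕋 × S³`.  The map `(η; z, w) ↦ z` is constant on orbits and induces a homeomorphism from
the orbit space `(𝕋 × S³)/ℝ²`, endowed with the quotient topology, onto the closed unit
disk `{ζ ∈ ℂ : |ζ| ≤ 1}`. -/
-- step 1: compactness of TorusS3
instance : CompactSpace TorusS3 := by
  have hcl : IsClosed {v : ℂ × ℂ × ℂ | ‖v.1‖ = 1 ∧ ‖v.2.1‖ ^ 2 + ‖v.2.2‖ ^ 2 = 1} := by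
    apply IsClosed.inter
    · exact isClosed_eq (by fun_prop) continuous_const
    · exact isClosed_eq (by fun_prop) continuous_const
  have hbd : Bornology.IsBounded {v : ℂ × ℂ × ℂ | ‖v.1‖ = 1 ∧ ‖v.2.1‖ ^ 2 + ‖v.2.2‖ ^ 2 = 1} := by
    apply Metric.isBounded_iff_subset_closedBall 0 |>.mpr
    refine ⟨1, fun v hv => ?_⟩
    obtain ⟨h1, h2⟩ := hv
    have hz : ‖v.2.1‖ ≤ 1 := by nlinarith [norm_nonneg v.2.1, norm_nonneg v.2.2, sq_nonneg ‖v.2.2‖]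
    have hw : ‖v.2.2‖ ≤ 1 := by nlinarith [norm_nonneg v.2.1, norm_nonneg v.2.2]
    simp only [Metric.mem_closedBall, dist_zero_right, Prod.norm_def]
    simp [h1, hz, hw]
  exact isCompact_iff_compactSpace.mp (Metric.isCompact_of_isClosed_isBounded hcl hbd)

-- step 2: phase lemma
lemma phase {a b : ℂ} (h : ‖a‖ = ‖b‖) : ∃ θ : ℝ, b = Complex.exp (θ * Complex.I) * a := by
  rcases eq_or_ne a 0 with rfl | ha
  · exact ⟨0, by simpa [eq_comm, ← norm_eq_zero, ← h]⟩
  · refine ⟨(b / a).arg, ?_⟩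
    have h1 : ‖b / a‖ = 1 := by
      rw [norm_div, ← h, div_self (by simpa using ha)]
    have h2 := Complex.norm_mul_exp_arg_mul_I (b / a)
    rw [h1] at h2
    simp only [Complex.ofReal_one, one_mul] at h2
    rw [h2, div_mul_cancel₀ _ ha]

lemma diskMap_mem (v : TorusS3) : ‖(v : ℂ × ℂ × ℂ).2.1‖ ≤ 1 := by
  obtain ⟨h1, h2⟩ := v.2
  nlinarith [norm_nonneg (v : ℂ × ℂ × ℂ).2.1, sq_nonneg ‖(v : ℂ × ℂ × ℂ).2.2‖]

def diskMap (v : TorusS3) : {ζ : ℂ // ‖ζ‖ ≤ 1} := ⟨(v : ℂ × ℂ × ℂ).2.1, diskMap_mem v⟩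

lemma diskMap_continuous : Continuous diskMap :=
  Continuous.subtype_mk (by fun_prop) _

lemma rel_of_eq {v w : TorusS3} (h : (v : ℂ × ℂ × ℂ).2.1 = (w : ℂ × ℂ × ℂ).2.1) :
    torusS3Rel v w := by
  obtain ⟨hv1, hv2⟩ := v.2
  obtain ⟨hw1, hw2⟩ := w.2
  obtain ⟨θ, hθ⟩ := phase (a := (v : ℂ × ℂ × ℂ).1) (b := (w : ℂ × ℂ × ℂ).1) (by rw [hv1, hw1])
  have hnw : ‖(v : ℂ × ℂ × ℂ).2.2‖ = ‖(w : ℂ × ℂ × ℂ).2.2‖ := by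
    rw [h] at hv2
    nlinarith [norm_nonneg (v : ℂ × ℂ × ℂ).2.2, norm_nonneg (w : ℂ × ℂ × ℂ).2.2]
  obtain ⟨θ', hθ'⟩ := phase hnw
  refine ⟨-θ / (2 * Real.pi), θ' / (4 * Real.pi), ?_⟩
  have hpi : ((Real.pi : ℂ)) ≠ 0 := Complex.ofReal_ne_zero.mpr Real.pi_ne_zero
  have c1 : -(2 * (Real.pi : ℂ) * ((-θ / (2 * Real.pi) : ℝ) : ℂ)) = (θ : ℂ) := by
    push_cast; field_simp
  have c2 : 4 * (Real.pi : ℂ) * ((θ' / (4 * Real.pi) : ℝ) : ℂ) = (θ' : ℂ) := by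
    push_cast; field_simp
  refine Prod.ext ?_ (Prod.ext h.symm ?_)
  · rw [c1]; exact hθ
  · rw [c2]; exact hθ'

theorem torusS3_orbit_space_homeomorph_closed_disk :
    (∀ v w : TorusS3, torusS3Rel v w → (v : ℂ × ℂ × ℂ).2.1 = (w : ℂ × ℂ × ℂ).2.1) ∧
    ∃ F : Quot torusS3Rel ≃ₜ {ζ : ℂ // ‖ζ‖ ≤ 1},
      ∀ v : TorusS3, (F (Quot.mk torusS3Rel v) : ℂ) = (v : ℂ × ℂ × ℂ).2.1 := by
  have hconst : ∀ v w : TorusS3, torusS3Rel v w →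
      (v : ℂ × ℂ × ℂ).2.1 = (w : ℂ × ℂ × ℂ).2.1 := by
    rintro v w ⟨x, y, hw⟩; rw [hw]
  refine ⟨hconst, ?_⟩
  let f : Quot torusS3Rel → {ζ : ℂ // ‖ζ‖ ≤ 1} :=
    Quot.lift diskMap (fun v w h => Subtype.ext (hconst v w h))
  have hcont : Continuous f := continuous_quot_lift _ diskMap_continuous
  have hinj : Function.Injective f := by
    intro a b
    refine Quot.induction_on₂ a b ?_
    intro v w h
    have h' : diskMap v = diskMap w := h
    exact Quot.sound (rel_of_eq (congrArg Subtype.val h'))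
  have hsurj : Function.Surjective f := by
    rintro ⟨ζ, hζ⟩
    have h1 : (0:ℝ) ≤ 1 - ‖ζ‖ ^ 2 := by nlinarith [norm_nonneg ζ]
    refine ⟨Quot.mk _ ⟨(1, ζ, ((Real.sqrt (1 - ‖ζ‖ ^ 2) : ℝ) : ℂ)), ?_, ?_⟩, rfl⟩
    · simp
    · simp only [Complex.norm_real, Real.norm_eq_abs, abs_of_nonneg (Real.sqrt_nonneg _),
        Real.sq_sqrt h1]
      ring
  have hbij : Function.Bijective f := ⟨hinj, hsurj⟩
  refine ⟨Continuous.homeoOfEquivCompactToT2 (f := Equiv.ofBijective f hbij) hcont,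
    fun v => ?_⟩
  show ((f (Quot.mk torusS3Rel v) : {ζ : ℂ // ‖ζ‖ ≤ 1}) : ℂ) = _
  simp only [f]
  rfl
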